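/- Let a(λ)=sinh(λ+γ), b(λ)=sinh(λ), c=sinh(γ), and for fixed μ₁,…,μ_L ∈ ℂ and λ₁^B,…,λ_n^B, λ₁^C,…,λ_n^C ∈ ℂ define, for λ₀ ∈ ℂ, M₀(λ₀) = ∏_{j=1}^L a(λ₀-μⱼ) [∏_{i=1}^n a(λᵢ^C-λ₀)/b(λᵢ^C-λ₀) - ∏_{i=1}^n a(λᵢ^B-λ₀)/b(λᵢ^B-λ₀)] and N_i^{(B)}(λ₀) = (c(λᵢ^B-λ₀)/b(λᵢ^B-λ₀)) ∏_{j=1}^L a(λᵢ^B-μⱼ) ∏_{j≠i} a(λⱼ^B-λᵢ^B)/b(λⱼ^B-λᵢ^B), with c(λ)=sinh(γ) constant. Then lim_{λ₀→λᵢ^B} b(λ₀-λᵢ^B) M₀(λ₀) = - lim_{λ₀→λᵢ^B} b(λ₀-λᵢ^B) N_i^{(B)}(λ₀) = c ∏_{j=1}^L a(λᵢ^B-μⱼ) ∏_{j≠i} a(λⱼ^B-λᵢ^B)/b(λⱼ^B-λᵢ^B), assuming λᵢ^B-λⱼ^B ∉ πiℤ for j≠i and λᵢ^B-λⱼ^C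 ∉ πiℤ for all j. -/

import Mathlib

open Filter Complex

lemma aux_sinh_eq_zero_iff (z : ℂ) :
    Complex.sinh z = 0 ↔ ∃ k : ℤ, z = Real.pi * Complex.I * k := by
  constructor
  · intro h
    have hs : Complex.sin (z * Complex.I) = 0 := by rw [Complex.sin_mul_I, h, zero_mul]
    rw [Complex.sin_eq_zero_iff] at hs
    obtain ⟨k, hk⟩ := hs
    refine ⟨-k, ?_⟩
    have h3 : z * Complex.I * (-Complex.I) = z := by
      ring_nf
      rw [Complex.I_sq]; ring
    push_cast
    rw [← h3, hk]; ring
  · rintro ⟨k, rfl⟩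
    have : Complex.sin ((Real.pi : ℂ) * Complex.I * k * Complex.I) = 0 := by
      have : (Real.pi : ℂ) * Complex.I * k * Complex.I = (-k : ℤ) * Real.pi := by
        push_cast; ring_nf; rw [Complex.I_sq]; ring
      rw [this, Complex.sin_eq_zero_iff]
      exact ⟨-k, by push_cast; ring⟩
    rw [Complex.sin_mul_I, mul_eq_zero] at this
    rcases this with h | h
    · exact h
    · exact absurd h Complex.I_ne_zero

lemma aux_sinh_ne_zero_of_small {z : ℂ} (h0 : z ≠ 0) (h1 : ‖z‖ < Real.pi) :
    Complex.sinh z ≠ 0 := by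
  intro h
  rw [aux_sinh_eq_zero_iff] at h
  obtain ⟨k, rfl⟩ := h
  rcases eq_or_ne k 0 with rfl | hk0
  · simp at h0
  · have habs : ‖(Real.pi : ℂ) * Complex.I * k‖ = Real.pi * |(k : ℝ)| := by
      simp [map_mul, abs_of_pos Real.pi_pos, Complex.norm_intCast]
    have hk1 : (1 : ℝ) ≤ |(k : ℝ)| := by
      rw [← Int.cast_abs]
      exact_mod_cast Int.one_le_abs hk0
    rw [habs] at h1
    nlinarith [Real.pi_pos]

lemma aux_sinh_ne_zero_of_not_pi {z : ℂ} (h : ¬ ∃ k : ℤ, z = Real.pi * Complex.I * k) :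
    Complex.sinh z ≠ 0 := fun hz => h ((aux_sinh_eq_zero_iff z).mp hz)

/-- The residues of the coefficients `M₀` and `N_i^{(B)}` at `λ₀ = λ_i^B` are opposite:
`lim_{λ₀→λᵢᴮ} b(λ₀-λᵢᴮ) M₀(λ₀) = - lim_{λ₀→λᵢᴮ} b(λ₀-λᵢᴮ) Nᵢᴮ(λ₀)
  = c ∏ⱼ a(λᵢᴮ-μⱼ) ∏_{j≠i} a(λⱼᴮ-λᵢᴮ)/b(λⱼᴮ-λᵢᴮ)`. -/
theorem residues_M0_NiB (γ : ℂ) {L n : ℕ} (μ : Fin L → ℂ)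
    (lamB lamC : Fin n → ℂ) (i : Fin n)
    (hB : ∀ j, j ≠ i → ¬ ∃ k : ℤ, lamB i - lamB j = Real.pi * Complex.I * k)
    (hC : ∀ j, ¬ ∃ k : ℤ, lamB i - lamC j = Real.pi * Complex.I * k) :
    Tendsto (fun lam₀ : ℂ =>
        Complex.sinh (lam₀ - lamB i) *
          ((∏ j, Complex.sinh (lam₀ - μ j + γ)) *
            ((∏ t, Complex.sinh (lamC t - lam₀ + γ) / Complex.sinh (lamC t - lam₀)) -
             (∏ t, Complex.sinh (lamB t - lam₀ + γ) / Complex.sinh (lamB t - lam₀)))))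
      (nhdsWithin (lamB i) {lamB i}ᶜ)
      (nhds (Complex.sinh γ * (∏ j, Complex.sinh (lamB i - μ j + γ)) *
        ∏ t ∈ Finset.univ.erase i,
          Complex.sinh (lamB t - lamB i + γ) / Complex.sinh (lamB t - lamB i))) ∧
    Tendsto (fun lam₀ : ℂ =>
        Complex.sinh (lam₀ - lamB i) *
          ((Complex.sinh γ / Complex.sinh (lamB i - lam₀)) *
            (∏ j, Complex.sinh (lamB i - μ j + γ)) *
            ∏ t ∈ Finset.univ.erase i,
              Complex.sinh (lamB t - lamB i + γ) / Complex.sinh (lamB t - lamB i)))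
      (nhdsWithin (lamB i) {lamB i}ᶜ)
      (nhds (-(Complex.sinh γ * (∏ j, Complex.sinh (lamB i - μ j + γ)) *
        ∏ t ∈ Finset.univ.erase i,
          Complex.sinh (lamB t - lamB i + γ) / Complex.sinh (lamB t - lamB i)))) := by
  have l := nhdsWithin (lamB i) ({lamB i}ᶜ : Set ℂ)
  -- eventually sinh (lamB i - lam₀) ≠ 0 on the punctured neighborhood
  have hev : ∀ᶠ lam₀ in nhdsWithin (lamB i) {lamB i}ᶜ,
      Complex.sinh (lamB i - lam₀) ≠ 0 := by
    have hball : ∀ᶠ lam₀ in nhdsWithin (lamB i) {lamB i}ᶜ,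
        lam₀ ∈ Metric.ball (lamB i) Real.pi :=
      eventually_nhdsWithin_of_eventually_nhds
        (Metric.ball_mem_nhds _ Real.pi_pos)
    have hne : ∀ᶠ lam₀ in nhdsWithin (lamB i) {lamB i}ᶜ, lam₀ ≠ lamB i :=
      eventually_mem_nhdsWithin.mono fun x hx => hx
    filter_upwards [hball, hne] with lam₀ h1 h2
    apply aux_sinh_ne_zero_of_small
    · exact sub_ne_zero.mpr (Ne.symm h2)
    · rw [norm_sub_rev]
      simpa [Complex.dist_eq] using h1
  set P : ℂ → ℂ := fun lam₀ => ∏ j, Complex.sinh (lam₀ - μ j + γ) with hP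
  set RB : ℂ → ℂ := fun lam₀ => ∏ t ∈ Finset.univ.erase i,
      Complex.sinh (lamB t - lam₀ + γ) / Complex.sinh (lamB t - lam₀) with hRB
  set Cf : ℂ → ℂ := fun lam₀ => ∏ t,
      Complex.sinh (lamC t - lam₀ + γ) / Complex.sinh (lamC t - lam₀) with hCf
  -- continuity pieces
  have hPtend : Tendsto P (nhdsWithin (lamB i) {lamB i}ᶜ) (nhds (P (lamB i))) := by
    refine Tendsto.mono_left ?_ nhdsWithin_le_nhds
    exact tendsto_finset_prod _ fun j _ =>
      ((Complex.continuous_sinh.comp (by continuity)).tendsto _)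
  have hCtend : Tendsto Cf (nhdsWithin (lamB i) {lamB i}ᶜ) (nhds (Cf (lamB i))) := by
    refine Tendsto.mono_left ?_ nhdsWithin_le_nhds
    refine tendsto_finset_prod _ fun t _ => ?_
    have hden : Complex.sinh (lamC t - lamB i) ≠ 0 := by
      apply aux_sinh_ne_zero_of_not_pi
      rintro ⟨k, hk⟩
      exact hC t ⟨-k, by push_cast; linear_combination -hk⟩
    exact Tendsto.div ((Complex.continuous_sinh.comp (by continuity)).tendsto _)
      ((Complex.continuous_sinh.comp (by continuity)).tendsto _) hden
  have hRBtend : Tendsto RB (nhdsWithin (lamB i) {lamB i}ᶜ) (nhds (RB (lamB i))) := by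
    refine Tendsto.mono_left ?_ nhdsWithin_le_nhds
    refine tendsto_finset_prod _ fun t ht => ?_
    have hden : Complex.sinh (lamB t - lamB i) ≠ 0 := by
      apply aux_sinh_ne_zero_of_not_pi
      rintro ⟨k, hk⟩
      exact hB t (Finset.ne_of_mem_erase ht) ⟨-k, by push_cast; linear_combination -hk⟩
    exact Tendsto.div ((Complex.continuous_sinh.comp (by continuity)).tendsto _)
      ((Complex.continuous_sinh.comp (by continuity)).tendsto _) hden
  have hsinh0 : Tendsto (fun lam₀ : ℂ => Complex.sinh (lam₀ - lamB i))
      (nhdsWithin (lamB i) {lamB i}ᶜ) (nhds 0) := by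
    refine Tendsto.mono_left ?_ nhdsWithin_le_nhds
    have hc : Continuous fun lam₀ : ℂ => Complex.sinh (lam₀ - lamB i) := by continuity
    have := hc.tendsto (lamB i)
    simpa using this
  have hsinhγ : Tendsto (fun lam₀ : ℂ => Complex.sinh (lamB i - lam₀ + γ))
      (nhdsWithin (lamB i) {lamB i}ᶜ) (nhds (Complex.sinh γ)) := by
    refine Tendsto.mono_left ?_ nhdsWithin_le_nhds
    have hc : Continuous fun lam₀ : ℂ => Complex.sinh (lamB i - lam₀ + γ) := by continuity
    have := hc.tendsto (lamB i)
    simpa using this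
  constructor
  · -- first limit
    have hg : Tendsto (fun lam₀ : ℂ =>
        P lam₀ * (Complex.sinh (lam₀ - lamB i) * Cf lam₀ +
          Complex.sinh (lamB i - lam₀ + γ) * RB lam₀))
        (nhdsWithin (lamB i) {lamB i}ᶜ)
        (nhds (P (lamB i) * ((0 : ℂ) * Cf (lamB i) +
          Complex.sinh γ * RB (lamB i)))) :=
      hPtend.mul ((hsinh0.mul hCtend).add (hsinhγ.mul hRBtend))
    have hval : P (lamB i) * ((0 : ℂ) * Cf (lamB i) + Complex.sinh γ * RB (lamB i)) =
        Complex.sinh γ * (∏ j, Complex.sinh (lamB i - μ j + γ)) *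
        ∏ t ∈ Finset.univ.erase i,
          Complex.sinh (lamB t - lamB i + γ) / Complex.sinh (lamB t - lamB i) := by
      simp only [hP, hRB]; ring
    rw [hval] at hg
    refine Tendsto.congr' ?_ hg
    filter_upwards [hev] with lam₀ h
    have hsplit : (∏ t, Complex.sinh (lamB t - lam₀ + γ) / Complex.sinh (lamB t - lam₀)) =
        (Complex.sinh (lamB i - lam₀ + γ) / Complex.sinh (lamB i - lam₀)) * RB lam₀ :=
      (Finset.mul_prod_erase _ _ (Finset.mem_univ i)).symm
    have hs : Complex.sinh (lam₀ - lamB i) = -Complex.sinh (lamB i - lam₀) := by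
      rw [show lam₀ - lamB i = -(lamB i - lam₀) by ring, Complex.sinh_neg]
    rw [hsplit, hs]
    have hd : Complex.sinh (lamB i - lam₀ + γ) / Complex.sinh (lamB i - lam₀) *
        Complex.sinh (lamB i - lam₀) = Complex.sinh (lamB i - lam₀ + γ) :=
      div_mul_cancel₀ _ h
    simp only [hP, hCf]
    linear_combination (-((∏ j, Complex.sinh (lam₀ - μ j + γ)) * RB lam₀)) * hd
  · -- second limit
    refine Tendsto.congr' ?_ tendsto_const_nhds
    filter_upwards [hev] with lam₀ h
    have hs : Complex.sinh (lam₀ - lamB i) = -Complex.sinh (lamB i - lam₀) := by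
      rw [show lam₀ - lamB i = -(lamB i - lam₀) by ring, Complex.sinh_neg]
    rw [hs]
    have hd : Complex.sinh γ / Complex.sinh (lamB i - lam₀) *
        Complex.sinh (lamB i - lam₀) = Complex.sinh γ := div_mul_cancel₀ _ h
    linear_combination ((∏ j, Complex.sinh (lamB i - μ j + γ)) *
      ∏ t ∈ Finset.univ.erase i,
        Complex.sinh (lamB t - lamB i + γ) / Complex.sinh (lamB t - lamB i)) * hd
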